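/- For all integers n ≥ 161, (1/10)·(4π/5)·cos(π/5)·(5n-1)^{-1/2}·e^{(4π/5)√(5n-1)} / √((4π/5)√(5n-1)) > (2e^{54} + e^{8π} + 185)·e² + (2π^{5/4}/5)·e^{(2π/5)√(5n-1)}·(5n-1)^{1/2}. -/

import Mathlib

set_option maxHeartbeats 800000


open Real

theorem main_term_dominates (n : ℕ) (hn : 161 ≤ n) :
    (2 * Real.exp 54 + Real.exp (8 * π) + 185) * Real.exp 2 +
        (2 * π ^ ((5 : ℝ) / 4) / 5) * Real.exp ((2 * π / 5) * Real.sqrt (5 * n - 1)) *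
          Real.sqrt (5 * n - 1)
      < (1 / 10) * ((4 * π / 5) * Real.cos (π / 5)) * (1 / Real.sqrt (5 * n - 1)) *
          (Real.exp ((4 * π / 5) * Real.sqrt (5 * n - 1)) /
            Real.sqrt ((4 * π / 5) * Real.sqrt (5 * n - 1))) := by
  have hπl : (3.14 : ℝ) ≤ π := by linarith [Real.pi_gt_d2]
  have hπu : π ≤ 3.15 := le_of_lt Real.pi_lt_d2
  set y : ℝ := 5 * (n : ℝ) - 1 with hy
  have hy804 : (804 : ℝ) ≤ y := by
    have h : (161 : ℝ) ≤ (n : ℝ) := by exact_mod_cast hn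
    rw [hy]; linarith
  set x : ℝ := Real.sqrt y with hxdef
  have hx28 : (28 : ℝ) ≤ x := by
    have h28 : (28 : ℝ) = Real.sqrt 784 := by
      rw [show (784 : ℝ) = 28 ^ 2 by norm_num, Real.sqrt_sq (by norm_num : (0:ℝ) ≤ 28)]
    rw [h28, hxdef]
    exact Real.sqrt_le_sqrt (by linarith)
  have hxpos : (0 : ℝ) < x := by linarith
  have he1 : (2.7 : ℝ) < Real.exp 1 := by linarith [Real.exp_one_gt_d9]
  -- x grows slower than exp
  have hexpx : x < 20 * Real.exp (x / 20) := by
    have h := Real.add_one_le_exp (x / 20)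
    linarith
  -- bound for the sqrt in the denominator
  set S : ℝ := Real.sqrt ((4 * π / 5) * x) with hSdef
  have hSpos : 0 < S := Real.sqrt_pos.mpr (by positivity)
  have hS : S ≤ 1.6 * x := by
    have h1 : (4 * π / 5) * x ≤ (1.6 * x) ^ 2 := by nlinarith
    calc S ≤ Real.sqrt ((1.6 * x) ^ 2) := Real.sqrt_le_sqrt h1
      _ = 1.6 * x := Real.sqrt_sq (by linarith)
  have hE2 : Real.exp (x / 20) * Real.exp (x / 20) = Real.exp (x / 10) := by
    rw [← Real.exp_add]; ring_nf
  have hXS : x * S ≤ 640 * Real.exp (x / 10) := by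
    nlinarith [Real.exp_pos (x / 20), mul_le_mul_of_nonneg_left hS hxpos.le,
      mul_pos (Real.exp_pos (x / 20)) (Real.exp_pos (x / 20))]
  -- cosine bound
  have h5 : (2.2 : ℝ) ≤ Real.sqrt 5 := by
    have : (2.2 : ℝ) = Real.sqrt 4.84 := by
      rw [show (4.84 : ℝ) = 2.2 ^ 2 by norm_num, Real.sqrt_sq (by norm_num : (0:ℝ) ≤ 2.2)]
    rw [this]; exact Real.sqrt_le_sqrt (by norm_num)
  have hcos : (0.8 : ℝ) ≤ Real.cos (π / 5) := by
    rw [Real.cos_pi_div_five]; linarith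
  have hcos1 : Real.cos (π / 5) ≤ 1 := Real.cos_le_one _
  have hc : (0.2 : ℝ) ≤ (1 / 10) * ((4 * π / 5) * Real.cos (π / 5)) := by nlinarith
  -- pi rpow bound
  have hrpow : π ^ ((5 : ℝ) / 4) ≤ 10 := by
    have h1 : π ^ ((5 : ℝ) / 4) ≤ π ^ (2 : ℝ) :=
      Real.rpow_le_rpow_of_exponent_le (by linarith) (by norm_num)
    have h2 : π ^ (2 : ℝ) = π ^ (2 : ℕ) := by
      rw [← Real.rpow_natCast π 2]; norm_num
    rw [h2] at h1
    nlinarith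
  have hrpow0 : 0 ≤ π ^ ((5 : ℝ) / 4) := Real.rpow_nonneg Real.pi_pos.le _
  -- constant-term bound
  have h185 : (185 : ℝ) ≤ Real.exp 6 := by
    have h1 : (2.7 : ℝ) ^ (6 : ℕ) ≤ Real.exp 1 ^ (6 : ℕ) :=
      pow_le_pow_left₀ (by norm_num) he1.le 6
    rw [Real.exp_one_pow] at h1
    norm_num at h1 ⊢
    linarith
  have h8π : Real.exp (8 * π) ≤ Real.exp 26 := Real.exp_le_exp.mpr (by linarith)
  have h2627 : Real.exp 26 + Real.exp 6 ≤ Real.exp 54 := by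
    have h1 : Real.exp 26 * 2 ≤ Real.exp 26 * Real.exp 1 := by
      nlinarith [Real.exp_pos (26 : ℝ)]
    have h2 : Real.exp 26 * Real.exp 1 = Real.exp 27 := by
      rw [← Real.exp_add]; norm_num
    have h3 : Real.exp 27 ≤ Real.exp 54 := Real.exp_le_exp.mpr (by norm_num)
    have h4 : Real.exp 6 ≤ Real.exp 26 := Real.exp_le_exp.mpr (by norm_num)
    linarith
  have hC : (2 * Real.exp 54 + Real.exp (8 * π) + 185) * Real.exp 2 ≤ 3 * Real.exp 56 := by
    have h1 : 2 * Real.exp 54 + Real.exp (8 * π) + 185 ≤ 3 * Real.exp 54 := by linarith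
    have h2 : Real.exp 54 * Real.exp 2 = Real.exp 56 := by rw [← Real.exp_add]; norm_num
    calc (2 * Real.exp 54 + Real.exp (8 * π) + 185) * Real.exp 2
        ≤ (3 * Real.exp 54) * Real.exp 2 :=
          mul_le_mul_of_nonneg_right h1 (Real.exp_pos 2).le
      _ = 3 * Real.exp 56 := by rw [mul_assoc, h2]
  -- exp numeric lower bounds
  have hexp11 : (19200 : ℝ) < Real.exp 11 := by
    have h1 : (2.7 : ℝ) ^ (11 : ℕ) ≤ Real.exp 1 ^ (11 : ℕ) :=
      pow_le_pow_left₀ (by norm_num) he1.le 11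
    rw [Real.exp_one_pow] at h1
    norm_num at h1 ⊢
    linarith
  have hexp14 : (512000 : ℝ) < Real.exp 14 := by
    have h1 : (2.7 : ℝ) ^ (14 : ℕ) ≤ Real.exp 1 ^ (14 : ℕ) :=
      pow_le_pow_left₀ (by norm_num) he1.le 14
    rw [Real.exp_one_pow] at h1
    norm_num at h1 ⊢
    linarith
  -- abbreviations
  set E : ℝ := Real.exp ((4 * π / 5) * x) with hEdef
  have hEpos : 0 < E := Real.exp_pos _
  -- rewrite RHS as a single fraction
  have hRHS : (1 / 10) * ((4 * π / 5) * Real.cos (π / 5)) * (1 / x) * (E / S)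
      = ((1 / 10) * ((4 * π / 5) * Real.cos (π / 5))) * E / (x * S) := by
    field_simp
  rw [hRHS, lt_div_iff₀ (by positivity)]
  -- bound the left side
  have hterm2 : (2 * π ^ ((5 : ℝ) / 4) / 5) * Real.exp ((2 * π / 5) * x) * x
      ≤ 80 * Real.exp ((2 * π / 5) * x + x / 20) := by
    have h1 : (2 * π ^ ((5 : ℝ) / 4) / 5) * Real.exp ((2 * π / 5) * x) * x
        ≤ 4 * Real.exp ((2 * π / 5) * x) * (20 * Real.exp (x / 20)) := by
      have hco : 2 * π ^ ((5 : ℝ) / 4) / 5 ≤ 4 := by linarith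
      have := Real.exp_pos ((2 * π / 5) * x)
      have := Real.exp_pos (x / 20)
      nlinarith [mul_pos (Real.exp_pos ((2 * π / 5) * x)) hxpos]
    have h2 : 4 * Real.exp ((2 * π / 5) * x) * (20 * Real.exp (x / 20))
        = 80 * Real.exp ((2 * π / 5) * x + x / 20) := by
      rw [Real.exp_add]; ring
    linarith
  set A : ℝ := (2 * Real.exp 54 + Real.exp (8 * π) + 185) * Real.exp 2 +
      (2 * π ^ ((5 : ℝ) / 4) / 5) * Real.exp ((2 * π / 5) * x) * x with hAdef
  have hA : A ≤ 3 * Real.exp 56 + 80 * Real.exp ((2 * π / 5) * x + x / 20) := by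
    rw [hAdef]; linarith
  have hA0 : 0 ≤ A := by
    rw [hAdef]
    have := Real.exp_pos (8 * π)
    have := Real.exp_pos (54 : ℝ)
    have := Real.exp_pos (2 : ℝ)
    have := Real.exp_pos ((2 * π / 5) * x)
    positivity
  have hstep : A * (x * S) ≤ (3 * Real.exp 56 + 80 * Real.exp ((2 * π / 5) * x + x / 20))
      * (640 * Real.exp (x / 10)) := by
    apply mul_le_mul hA hXS (by positivity)
    positivity
  have hexpand : (3 * Real.exp 56 + 80 * Real.exp ((2 * π / 5) * x + x / 20))
      * (640 * Real.exp (x / 10))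
      = 1920 * Real.exp (56 + x / 10) + 51200 * Real.exp ((2 * π / 5) * x + x / 20 + x / 10) := by
    rw [Real.exp_add 56 (x / 10), Real.exp_add ((2 * π / 5) * x + x / 20) (x / 10)]
    ring
  -- piece (a)
  have ha : 1920 * Real.exp (56 + x / 10) < 0.1 * E := by
    have hΔ : (11 : ℝ) ≤ (4 * π / 5) * x - (56 + x / 10) := by
      linarith [mul_le_mul_of_nonneg_right hπl hxpos.le]
    have h1 : Real.exp 11 ≤ Real.exp ((4 * π / 5) * x - (56 + x / 10)) :=
      Real.exp_le_exp.mpr hΔ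
    have h2 : E = Real.exp (56 + x / 10) * Real.exp ((4 * π / 5) * x - (56 + x / 10)) := by
      rw [hEdef, ← Real.exp_add]; ring_nf
    nlinarith [Real.exp_pos (56 + x / 10)]
  -- piece (b)
  have hb : 51200 * Real.exp ((2 * π / 5) * x + x / 20 + x / 10) < 0.1 * E := by
    have hΔ : (14 : ℝ) ≤ (4 * π / 5) * x - ((2 * π / 5) * x + x / 20 + x / 10) := by
      linarith [mul_le_mul_of_nonneg_right hπl hxpos.le]
    have h1 : Real.exp 14 ≤ Real.exp ((4 * π / 5) * x - ((2 * π / 5) * x + x / 20 + x / 10)) :=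
      Real.exp_le_exp.mpr hΔ
    have h2 : E = Real.exp ((2 * π / 5) * x + x / 20 + x / 10)
        * Real.exp ((4 * π / 5) * x - ((2 * π / 5) * x + x / 20 + x / 10)) := by
      rw [hEdef, ← Real.exp_add]; ring_nf
    nlinarith [Real.exp_pos ((2 * π / 5) * x + x / 20 + x / 10)]
  have hcE : 0.2 * E ≤ (1 / 10) * ((4 * π / 5) * Real.cos (π / 5)) * E :=
    mul_le_mul_of_nonneg_right hc hEpos.le
  calc A * (x * S)
      ≤ 1920 * Real.exp (56 + x / 10) + 51200 * Real.exp ((2 * π / 5) * x + x / 20 + x / 10) := by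
        rw [← hexpand]; exact hstep
    _ < 0.2 * E := by linarith
    _ ≤ (1 / 10) * ((4 * π / 5) * Real.cos (π / 5)) * E := hcE
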